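/- For any two probability measures Q and P on a measurable space, the total variation distance satisfies TV(Q, P) ≤ sqrt(1 - exp(-D_KL(Q‖P))) ≤ 1 - (1/2)·exp(-D_KL(Q‖P)) (the Bretagnolle–Huber inequality), where D_KL denotes Kullback–Leibler divergence. -/

import Mathlib

open MeasureTheory Real

/-- Total variation distance between two measures. -/
noncomputable def tvDist {Ω : Type*} [MeasurableSpace Ω] (Q P : Measure Ω) : ℝ :=
  ⨆ s : {s : Set Ω // MeasurableSet s}, |(Q s).toReal - (P s).toReal|

lemma BH_tv_le {Ω : Type*} [MeasurableSpace Ω]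
    (Q P : Measure Ω) [IsProbabilityMeasure Q] [IsProbabilityMeasure P] (hQP : Q ≪ P) :
    tvDist Q P ≤ 1 - ∫ x, min (Q.rnDeriv P x).toReal 1 ∂P := by
  set g : Ω → ℝ := fun x => (Q.rnDeriv P x).toReal with hg
  have hg_int : Integrable g P := Measure.integrable_toReal_rnDeriv
  have hm_int : Integrable (fun x => min (g x) 1) P := hg_int.inf (integrable_const 1)
  refine ciSup_le fun ⟨s, hs⟩ => ?_
  have hQs : ∫ x in s, g x ∂P = (Q s).toReal := Measure.setIntegral_toReal_rnDeriv hQP s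
  have hPs : ∫ x in s, (1 : ℝ) ∂P = (P s).toReal := by simp [Measure.real]
  rw [abs_sub_le_iff]
  constructor
  · have h1 : (Q s).toReal - (P s).toReal = ∫ x in s, (g x - 1) ∂P := by
      rw [integral_sub (hg_int.integrableOn) (integrable_const 1).integrableOn, hQs, hPs]
    rw [h1]
    calc ∫ x in s, (g x - 1) ∂P ≤ ∫ x in s, (g x - min (g x) 1) ∂P := by
          apply setIntegral_mono (hg_int.sub (integrable_const 1)).integrableOn
            (hg_int.sub hm_int).integrableOn
          intro x; simp only [Pi.sub_apply]; have := min_le_right (g x) (1:ℝ); linarith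
      _ ≤ ∫ x, (g x - min (g x) 1) ∂P := by
          apply setIntegral_le_integral (hg_int.sub hm_int)
          filter_upwards with x
          simp only [Pi.sub_apply, Pi.zero_apply]; have := min_le_left (g x) (1:ℝ); linarith
      _ = 1 - ∫ x, min (g x) 1 ∂P := by
          rw [integral_sub hg_int hm_int, Measure.integral_toReal_rnDeriv hQP]
          simp
  · have h1 : (P s).toReal - (Q s).toReal = ∫ x in s, (1 - g x) ∂P := by
      rw [integral_sub (integrable_const 1).integrableOn hg_int.integrableOn, hQs, hPs]
    rw [h1]
    calc ∫ x in s, (1 - g x) ∂P ≤ ∫ x in s, (1 - min (g x) 1) ∂P := by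
          apply setIntegral_mono ((integrable_const 1).sub hg_int).integrableOn
            ((integrable_const 1).sub hm_int).integrableOn
          intro x; simp only [Pi.sub_apply]; have := min_le_left (g x) (1:ℝ); linarith
      _ ≤ ∫ x, (1 - min (g x) 1) ∂P := by
          apply setIntegral_le_integral ((integrable_const 1).sub hm_int)
          filter_upwards with x
          simp only [Pi.sub_apply, Pi.zero_apply]; have := min_le_right (g x) (1:ℝ); linarith
      _ = 1 - ∫ x, min (g x) 1 ∂P := by
          rw [integral_sub (integrable_const 1) hm_int]
          simp

lemma BH_CS {Ω : Type*} [MeasurableSpace Ω]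
    (Q P : Measure Ω) [IsProbabilityMeasure Q] [IsProbabilityMeasure P] :
    (∫ x, Real.sqrt (Q.rnDeriv P x).toReal ∂P) ^ 2
      ≤ (∫ x, min (Q.rnDeriv P x).toReal 1 ∂P) * (∫ x, max (Q.rnDeriv P x).toReal 1 ∂P) := by
  set g : Ω → ℝ := fun x => (Q.rnDeriv P x).toReal with hgdef
  have hg_meas : Measurable g := (Measure.measurable_rnDeriv Q P).ennreal_toReal
  have hg_nonneg : ∀ x, 0 ≤ g x := fun x => ENNReal.toReal_nonneg
  have hg_int : Integrable g P := Measure.integrable_toReal_rnDeriv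
  set u : Ω → ℝ := fun x => Real.sqrt (min (g x) 1) with hudef
  set v : Ω → ℝ := fun x => Real.sqrt (max (g x) 1) with hvdef
  have hu_meas : Measurable u := (hg_meas.min measurable_const).sqrt
  have hv_meas : Measurable v := (hg_meas.max measurable_const).sqrt
  have hpq : Real.HolderConjugate 2 2 := Real.HolderConjugate.two_two
  have hof : (ENNReal.ofReal (2:ℝ)) = 2 := by norm_num
  have hu_mem : MemLp u (ENNReal.ofReal (2:ℝ)) P := by
    refine MemLp.of_bound hu_meas.aestronglyMeasurable 1 ?_
    filter_upwards with x
    rw [Real.norm_eq_abs, abs_of_nonneg (Real.sqrt_nonneg _)]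
    exact Real.sqrt_le_one.mpr (min_le_right _ _)
  have hv_mem : MemLp v (ENNReal.ofReal (2:ℝ)) P := by
    rw [hof]
    refine (memLp_two_iff_integrable_sq hv_meas.aestronglyMeasurable).mpr ?_
    have : Integrable (fun x => max (g x) 1) P := hg_int.sup (integrable_const 1)
    refine this.congr ?_
    filter_upwards with x
    rw [Real.sq_sqrt (le_trans zero_le_one (le_max_right _ _))]
  have hCS := integral_mul_le_Lp_mul_Lq_of_nonneg hpq
    (Filter.Eventually.of_forall fun x => Real.sqrt_nonneg _)
    (Filter.Eventually.of_forall fun x => Real.sqrt_nonneg _) hu_mem hv_mem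
  have huv : ∀ x, u x * v x = Real.sqrt (g x) := by
    intro x
    rw [hudef, hvdef, ← Real.sqrt_mul (le_min (hg_nonneg x) zero_le_one), min_mul_max, mul_one]
  have hu2 : ∀ x, u x ^ (2:ℝ) = min (g x) 1 := by
    intro x
    rw [show (2:ℝ) = ((2:ℕ):ℝ) by norm_num, Real.rpow_natCast,
      Real.sq_sqrt (le_min (hg_nonneg x) zero_le_one)]
  have hv2 : ∀ x, v x ^ (2:ℝ) = max (g x) 1 := by
    intro x
    rw [show (2:ℝ) = ((2:ℕ):ℝ) by norm_num, Real.rpow_natCast,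
      Real.sq_sqrt (le_trans zero_le_one (le_max_right _ _))]
  change ∫ a, u a * v a ∂P ≤ (∫ a, u a ^ (2:ℝ) ∂P) ^ (1 / (2:ℝ)) * (∫ a, v a ^ (2:ℝ) ∂P) ^ (1 / (2:ℝ)) at hCS
  simp only [huv, hu2, hv2] at hCS
  set A := ∫ x, min (g x) 1 ∂P with hA
  set B := ∫ x, max (g x) 1 ∂P with hB
  have hA_nonneg : 0 ≤ A := integral_nonneg fun x => le_min (hg_nonneg x) zero_le_one
  have hB_nonneg : 0 ≤ B := integral_nonneg fun x => le_trans zero_le_one (le_max_right _ _)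
  have hH_nonneg : 0 ≤ ∫ x, Real.sqrt (g x) ∂P := integral_nonneg fun x => Real.sqrt_nonneg _
  calc (∫ x, Real.sqrt (g x) ∂P) ^ 2 ≤ (A ^ ((1:ℝ)/2) * B ^ ((1:ℝ)/2)) ^ 2 := by
        apply pow_le_pow_left₀ hH_nonneg hCS 2
    _ = A * B := by
        rw [mul_pow, ← Real.rpow_natCast (A ^ ((1:ℝ)/2)) 2, ← Real.rpow_natCast (B ^ ((1:ℝ)/2)) 2,
          ← Real.rpow_mul hA_nonneg, ← Real.rpow_mul hB_nonneg]
        norm_num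

lemma BH_jensen {Ω : Type*} [MeasurableSpace Ω]
    (Q P : Measure Ω) [IsProbabilityMeasure Q] [IsProbabilityMeasure P]
    (hQP : Q ≪ P) (hint : Integrable (llr Q P) Q) :
    Real.exp (-(∫ x, llr Q P x ∂Q) / 2) ≤ ∫ x, Real.sqrt (Q.rnDeriv P x).toReal ∂P := by
  set g : Ω → ℝ := fun x => (Q.rnDeriv P x).toReal with hgdef
  -- change of variables: ∫ √g dP = ∫ exp(-llr/2) dQ
  have heq : ∫ x, Real.sqrt (g x) ∂P = ∫ x, Real.exp (-(llr Q P x) / 2) ∂Q := by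
    rw [← MeasureTheory.integral_rnDeriv_smul hQP (f := fun x => Real.exp (-(llr Q P x) / 2))]
    refine integral_congr_ae ?_
    filter_upwards [Measure.rnDeriv_lt_top Q P] with x hx
    by_cases h0 : Q.rnDeriv P x = 0
    · simp [hgdef, llr, h0]
    · have hpos : 0 < g x := ENNReal.toReal_pos h0 hx.ne
      have hllr : llr Q P x = Real.log (g x) := rfl
      have h1 : Real.exp (-(Real.log (g x)) / 2) = g x ^ (-(1/2) : ℝ) := by
        rw [Real.rpow_def_of_pos hpos]; ring_nf
      rw [Real.sqrt_eq_rpow, hllr, smul_eq_mul, h1]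
      show g x ^ ((1:ℝ)/2) = g x * g x ^ (-(1/2):ℝ)
      calc g x ^ ((1:ℝ)/2) = g x ^ ((1:ℝ) + -(1/2)) := by norm_num
        _ = g x ^ (1:ℝ) * g x ^ (-(1/2):ℝ) := Real.rpow_add hpos _ _
        _ = g x * g x ^ (-(1/2):ℝ) := by rw [Real.rpow_one]
  -- integrability of exp(-llr/2) w.r.t. Q
  have hPQ_int : Integrable (fun x => Real.sqrt (P.rnDeriv Q x).toReal) Q := by
    refine Integrable.mono' ((integrable_const (1:ℝ)).add (Measure.integrable_toReal_rnDeriv (μ := P) (ν := Q)))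
      ((Measure.measurable_rnDeriv P Q).ennreal_toReal.sqrt).aestronglyMeasurable ?_
    filter_upwards with x
    have ht : (0:ℝ) ≤ (P.rnDeriv Q x).toReal := ENNReal.toReal_nonneg
    rw [Real.norm_eq_abs, abs_of_nonneg (Real.sqrt_nonneg _)]; simp only [Pi.add_apply]
    nlinarith [Real.sq_sqrt ht, Real.sqrt_nonneg (P.rnDeriv Q x).toReal]
  have hexp_eq : (fun x => Real.exp (-(llr Q P x) / 2))
      =ᵐ[Q] fun x => Real.sqrt (P.rnDeriv Q x).toReal := by
    filter_upwards [exp_neg_llr hQP] with x hx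
    rw [Real.exp_half, hx]
  have hexp_int : Integrable (fun x => Real.exp (-(llr Q P x) / 2)) Q :=
    hPQ_int.congr hexp_eq.symm
  -- Jensen
  have hJ := ConvexOn.map_integral_le (μ := Q) (f := fun x => -(llr Q P x) / 2)
    convexOn_exp Real.continuous_exp.continuousOn isClosed_univ
    (Filter.Eventually.of_forall fun x => Set.mem_univ _)
    ((hint.neg).div_const 2) (by exact hexp_int)
  have hI : ∫ x, -(llr Q P x) / 2 ∂Q = -(∫ x, llr Q P x ∂Q) / 2 := by
    rw [integral_div, integral_neg]
  rw [hI] at hJ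
  rw [heq]
  exact hJ
/-- The Bretagnolle–Huber inequality:
`TV(Q, P) ≤ √(1 - exp(-D_KL(Q‖P))) ≤ 1 - (1/2) exp(-D_KL(Q‖P))`,
where `D_KL(Q‖P) = ∫ log(dQ/dP) dQ` for `Q ≪ P`. -/
theorem bretagnolle_huber {Ω : Type*} [MeasurableSpace Ω]
    (Q P : Measure Ω) [IsProbabilityMeasure Q] [IsProbabilityMeasure P]
    (hQP : Q ≪ P) (hint : Integrable (llr Q P) Q) :
    tvDist Q P ≤ Real.sqrt (1 - Real.exp (-(∫ x, llr Q P x ∂Q))) ∧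
    Real.sqrt (1 - Real.exp (-(∫ x, llr Q P x ∂Q)))
      ≤ 1 - (1 / 2) * Real.exp (-(∫ x, llr Q P x ∂Q)) := by
  set g : Ω → ℝ := fun x => (Q.rnDeriv P x).toReal with hgdef
  have hg_nonneg : ∀ x, 0 ≤ g x := fun x => ENNReal.toReal_nonneg
  have hg_int : Integrable g P := Measure.integrable_toReal_rnDeriv
  have hm_int : Integrable (fun x => min (g x) 1) P := hg_int.inf (integrable_const 1)
  have hM_int : Integrable (fun x => max (g x) 1) P := hg_int.sup (integrable_const 1)
  set K := ∫ x, llr Q P x ∂Q with hK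
  set A := ∫ x, min (g x) 1 ∂P with hA
  set B := ∫ x, max (g x) 1 ∂P with hB
  set H := ∫ x, Real.sqrt (g x) ∂P with hH
  set t := Real.exp (-K) with ht
  have htpos : 0 < t := Real.exp_pos _
  have hAB : A + B = 2 := by
    rw [hA, hB, ← integral_add hm_int hM_int]
    have : ∀ x, min (g x) 1 + max (g x) 1 = g x + 1 := fun x => min_add_max _ _
    simp_rw [this]
    rw [integral_add hg_int (integrable_const 1), Measure.integral_toReal_rnDeriv hQP]
    simp
    norm_num
  have hA1 : A ≤ 1 := by
    have := integral_mono hm_int (integrable_const (1:ℝ)) (fun x => min_le_right _ _)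
    simpa using this
  have hA0 : 0 ≤ A := integral_nonneg fun x => le_min (hg_nonneg x) zero_le_one
  have htv : tvDist Q P ≤ 1 - A := BH_tv_le Q P hQP
  have hH2 : H ^ 2 ≤ A * B := BH_CS Q P
  have hJ : Real.exp (-K / 2) ≤ H := BH_jensen Q P hQP hint
  have htH : t ≤ H ^ 2 := by
    have h1 : t = Real.exp (-K / 2) ^ 2 := by
      rw [sq, ← Real.exp_add]; ring_nf; exact ht
    rw [h1]
    exact pow_le_pow_left₀ (Real.exp_nonneg _) hJ 2
  have htA : t ≤ A * (2 - A) := by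
    have hB' : B = 2 - A := by linarith
    calc t ≤ H ^ 2 := htH
      _ ≤ A * B := hH2
      _ = A * (2 - A) := by rw [hB']
  have ht1 : t ≤ 1 := by nlinarith
  constructor
  · calc tvDist Q P ≤ 1 - A := htv
      _ = Real.sqrt ((1 - A) ^ 2) := (Real.sqrt_sq (by linarith)).symm
      _ ≤ Real.sqrt (1 - t) := Real.sqrt_le_sqrt (by nlinarith)
  · calc Real.sqrt (1 - t) ≤ Real.sqrt ((1 - (1/2) * t) ^ 2) :=
        Real.sqrt_le_sqrt (by nlinarith)
      _ = 1 - (1/2) * t := Real.sqrt_sq (by linarith)
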